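/- Let k ≥ 2 and s > 0, and define g_s^{(k)} : ℝ^{k-1} → ℝ by g_s^{(k)}(y_1,…,y_{k-1}) = max(0, s − max_{1≤i<k} max(y_i, 0) − max_{1≤i<k} max(−y_i, 0)). Then ∫_{ℝ^{k-1}} g_s^{(k)}(y_1,…,y_{k-1}) dy_1···dy_{k-1} = s^k. -/

import Mathlib

open Finset Filter MeasureTheory
open scoped Classical ENNReal NNReal

/-- Distance from `x` to the nearest integer. -/
noncomputable def nint (x : ℝ) : ℝ := |x - round x|

/-- Signed distance from `x` to the origin modulo 1. -/
noncomputable def sdist (x : ℝ) : ℝ :=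
  if Int.fract x ≤ 1 / 2 then Int.fract x else Int.fract x - 1

/-- Number of `k`-tuples of pairwise distinct indices in `{1,…,N}` whose rescaled signed
differences lie in the box `∏ r, [a r, b r]`. -/
noncomputable def corrBoxCount (x : ℕ → ℝ) (k N : ℕ) (a b : Fin (k - 1) → ℝ) : ℕ :=
  ((Fintype.piFinset fun _ : Fin k => Finset.Icc 1 N).filter fun i =>
    Function.Injective i ∧ ∀ r : Fin (k - 1),
      (N : ℝ) * sdist (x (i ⟨0, by have := r.2; omega⟩) - x (i ⟨r.1 + 1, by have := r.2; omega⟩))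
        ∈ Set.Icc (a r) (b r)).card

/-- The sequence `x` (indexed by `n ≥ 1`) has Poissonian correlations of order `k`. -/
def HasPoissonianCorr (x : ℕ → ℝ) (k : ℕ) : Prop :=
  ∀ a b : Fin (k - 1) → ℝ, (∀ r, a r ≤ b r) →
    Tendsto (fun N : ℕ => (corrBoxCount x k N a b : ℝ) / N) atTop
      (nhds (∏ r, (b r - a r)))

/-- The `k`-th order correlation function `R_k(s₁,…,s_{k-1},N)` (pairwise distinct indices). -/
noncomputable def Rcorr (x : ℕ → ℝ) (k N : ℕ) (s : Fin (k - 1) → ℝ) : ℝ :=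
  (((Fintype.piFinset fun _ : Fin k => Finset.Icc 1 N).filter fun i =>
    Function.Injective i ∧ ∀ r : Fin (k - 1),
      nint (x (i ⟨0, by have := r.2; omega⟩) - x (i ⟨r.1 + 1, by have := r.2; omega⟩))
        ≤ s r / N).card : ℝ) / N

/-- The `k`-th order correlation function `R_k^*(s₁,…,s_{k-1},N)` (indices not necessarily
distinct). -/
noncomputable def RcorrStar (x : ℕ → ℝ) (k N : ℕ) (s : Fin (k - 1) → ℝ) : ℝ :=
  (((Fintype.piFinset fun _ : Fin k => Finset.Icc 1 N).filter fun i =>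
    ∀ r : Fin (k - 1),
      nint (x (i ⟨0, by have := r.2; omega⟩) - x (i ⟨r.1 + 1, by have := r.2; omega⟩))
        ≤ s r / N).card : ℝ) / N

/-- The test function `g_s^{(k)}(y) = {s − max_i {y_i}⁺ − max_i {−y_i}⁺}⁺` on `ℝ^{k-1}`. -/
noncomputable def gTest (k : ℕ) (s : ℝ) (y : Fin (k - 1) → ℝ) : ℝ :=
  max 0 (s - (Finset.univ.fold max 0 fun i : Fin (k - 1) => max (y i) 0)
            - (Finset.univ.fold max 0 fun i : Fin (k - 1) => max (-(y i)) 0))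

private lemma continuous_fold_max {X ι : Type*} [TopologicalSpace X] [DecidableEq ι]
    (t : Finset ι) (f : ι → X → ℝ) (hf : ∀ i, Continuous (f i)) :
    Continuous fun x => t.fold max 0 (fun i => f i x) := by
  induction t using Finset.induction_on with
  | empty => simpa using continuous_const
  | insert _ _ h ih =>
      simp only [Finset.fold_insert h]
      exact (hf _).max ih

/-- For `k ≥ 2` and `s > 0`, the integral of `g_s^{(k)}` over `ℝ^{k-1}`
equals `s^k`. -/
theorem integral_gTest_eq_pow
    (k : ℕ) (hk : 2 ≤ k) (s : ℝ) (hs : 0 < s) :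
    ∫ y : Fin (k - 1) → ℝ, gTest k s y = s ^ k := by
  have hmk : (k - 1) + 1 = k := by omega
  set T : Set ((Fin (k - 1) → ℝ) × ℝ) :=
    {p | p.2 ∈ Set.Icc (-s) 0 ∧ ∀ i, p.1 i ∈ Set.Icc p.2 (p.2 + s)} with hTdef
  have hTclosed : IsClosed T := by
    have : T = {p : (Fin (k - 1) → ℝ) × ℝ | p.2 ∈ Set.Icc (-s) 0} ∩
        ⋂ i, {p : (Fin (k - 1) → ℝ) × ℝ | p.1 i ∈ Set.Icc p.2 (p.2 + s)} := by
      ext p; simp [hTdef, Set.mem_iInter]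
    rw [this]
    refine (isClosed_Icc.preimage continuous_snd).inter (isClosed_iInter fun i => ?_)
    exact (isClosed_le continuous_snd ((continuous_apply i).comp continuous_fst)).inter
      (isClosed_le ((continuous_apply i).comp continuous_fst)
        (continuous_snd.add continuous_const))
  have hTmeas : MeasurableSet T := hTclosed.measurableSet
  -- slice description in c
  have hslice : ∀ (y : Fin (k - 1) → ℝ) (c : ℝ), (y, c) ∈ T ↔
      c ∈ Set.Icc ((Finset.univ.fold max 0 fun i : Fin (k - 1) => max (y i) 0) - s)
        (-(Finset.univ.fold max 0 fun i : Fin (k - 1) => max (-(y i)) 0)) := by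
    intro y c
    simp only [hTdef, Set.mem_setOf_eq, Set.mem_Icc]
    constructor
    · rintro ⟨⟨h1, h2⟩, h3⟩
      constructor
      · have hA : (Finset.univ.fold max 0 fun i : Fin (k - 1) => max (y i) 0) ≤ c + s := by
          rw [Finset.fold_max_le]
          exact ⟨by linarith, fun i _ => max_le (h3 i).2 (by linarith)⟩
        linarith
      · have hB : (Finset.univ.fold max 0 fun i : Fin (k - 1) => max (-(y i)) 0) ≤ -c := by
          rw [Finset.fold_max_le]
          exact ⟨by linarith, fun i _ => max_le (by linarith [(h3 i).1]) (by linarith)⟩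
        linarith
    · rintro ⟨h1, h2⟩
      have hA : (Finset.univ.fold max 0 fun i : Fin (k - 1) => max (y i) 0) ≤ c + s := by
        linarith
      have hB : (Finset.univ.fold max 0 fun i : Fin (k - 1) => max (-(y i)) 0) ≤ -c := by
        linarith
      rw [Finset.fold_max_le] at hA hB
      refine ⟨⟨by linarith [hA.1], by linarith [hB.1]⟩, fun i => ?_⟩
      have := hA.2 i (Finset.mem_univ i)
      have := hB.2 i (Finset.mem_univ i)
      constructor
      · have := le_max_left (-(y i)) 0
        nlinarith [hB.2 i (Finset.mem_univ i), le_max_left (-(y i)) (0:ℝ)]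
      · linarith [le_max_left (y i) (0:ℝ), hA.2 i (Finset.mem_univ i)]
  -- pointwise: ofReal (gTest) = ∫⁻ c, indicator
  have hpoint : ∀ y : Fin (k - 1) → ℝ,
      ENNReal.ofReal (gTest k s y) = ∫⁻ c : ℝ, T.indicator 1 (y, c) := by
    intro y
    have : (fun c : ℝ => T.indicator 1 (y, c)) =
        (Set.Icc ((Finset.univ.fold max 0 fun i : Fin (k - 1) => max (y i) 0) - s)
          (-(Finset.univ.fold max 0 fun i : Fin (k - 1) => max (-(y i)) 0))).indicator
          (1 : ℝ → ℝ≥0∞) := by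
      funext c
      simp only [Set.indicator_apply, hslice y c]
      rfl
    rw [this, lintegral_indicator_one measurableSet_Icc, Real.volume_Icc]
    unfold gTest
    rcases le_total (s - (Finset.univ.fold max 0 fun i : Fin (k - 1) => max (y i) 0)
        - (Finset.univ.fold max 0 fun i : Fin (k - 1) => max (-(y i)) 0)) 0 with h | h
    · rw [max_eq_left h, ENNReal.ofReal_zero, Eq.comm, ENNReal.ofReal_eq_zero]
      linarith
    · rw [max_eq_right h]
      congr 1
      ring
  -- continuity / measurability of gTest
  have hcont : Continuous (gTest k s) := by
    unfold gTest
    refine continuous_const.max ?_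
    refine ((continuous_const.sub ?_).sub ?_)
    · exact continuous_fold_max _ _ fun i => (continuous_apply i).max continuous_const
    · exact continuous_fold_max _ _ fun i => (continuous_apply i).neg.max continuous_const
  have hnonneg : ∀ y, 0 ≤ gTest k s y := fun y => le_max_left _ _
  rw [integral_eq_lintegral_of_nonneg_ae (Filter.Eventually.of_forall hnonneg)
    (hcont.aestronglyMeasurable (μ := (volume : Measure (Fin (k-1) → ℝ))))]
  have hmeasT : AEMeasurable (Function.uncurry fun (y : Fin (k - 1) → ℝ) (c : ℝ) =>
      T.indicator (1 : ((Fin (k - 1) → ℝ) × ℝ) → ℝ≥0∞) (y, c))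
      ((volume : Measure (Fin (k - 1) → ℝ)).prod volume) := by
    have : (Function.uncurry fun (y : Fin (k - 1) → ℝ) (c : ℝ) =>
        T.indicator (1 : ((Fin (k - 1) → ℝ) × ℝ) → ℝ≥0∞) (y, c)) = T.indicator 1 := by
      funext p; cases p; rfl
    rw [this]
    exact (measurable_one.indicator hTmeas).aemeasurable
  calc (∫⁻ y : Fin (k - 1) → ℝ, ENNReal.ofReal (gTest k s y)).toReal
      = (∫⁻ y : Fin (k - 1) → ℝ, ∫⁻ c : ℝ, T.indicator 1 (y, c)).toReal := by
        congr 1; exact lintegral_congr hpoint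
    _ = (∫⁻ c : ℝ, ∫⁻ y : Fin (k - 1) → ℝ, T.indicator 1 (y, c)).toReal := by
        rw [lintegral_lintegral_swap hmeasT]
    _ = (∫⁻ c : ℝ, (Set.Icc (-s) 0).indicator
          (fun _ => ENNReal.ofReal s ^ (k - 1)) c).toReal := by
        congr 1
        refine lintegral_congr fun c => ?_
        by_cases hc : c ∈ Set.Icc (-s) 0
        · have hpt : ∀ y : Fin (k - 1) → ℝ,
              T.indicator (1 : ((Fin (k - 1) → ℝ) × ℝ) → ℝ≥0∞) (y, c) =
              (Set.univ.pi fun _ : Fin (k - 1) => Set.Icc c (c + s)).indicator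
                (1 : (Fin (k - 1) → ℝ) → ℝ≥0∞) y := by
            intro y
            simp only [Set.indicator_apply, hTdef, Set.mem_setOf_eq, Set.mem_univ_pi,
              Pi.one_apply]
            exact if_congr (by tauto) rfl rfl
          rw [lintegral_congr hpt, lintegral_indicator_one
              (MeasurableSet.univ_pi fun _ => measurableSet_Icc),
            volume_pi_pi, Set.indicator_of_mem hc]
          simp [Real.volume_Icc]
        · have hpt : ∀ y : Fin (k - 1) → ℝ,
              T.indicator (1 : ((Fin (k - 1) → ℝ) × ℝ) → ℝ≥0∞) (y, c) = 0 :=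
            fun y => Set.indicator_of_notMem (fun hmem => hc hmem.1) _
          rw [lintegral_congr hpt, lintegral_zero, Set.indicator_of_notMem hc]
    _ = s ^ k := by
        rw [lintegral_indicator measurableSet_Icc, setLIntegral_const, Real.volume_Icc]
        rw [show (0 : ℝ) - -s = s by ring, ← pow_succ, hmk,
          ← ENNReal.ofReal_pow hs.le, ENNReal.toReal_ofReal (pow_nonneg hs.le k)]
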